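/- Let x, y, x', y' be strictly positive real numbers with x/y ≠ x'/y'. Then there exists a real number φ such that (sin(xφ), sin(yφ)) ≠ (sin(x'φ), sin(y'φ)); that is, two points with different coordinate ratios cannot have the same Lissajous curve. -/

import Mathlib

lemma sin_mul_deriv (a : ℝ) : HasDerivAt (fun φ : ℝ => Real.sin (a * φ)) a 0 := by
  have h := (Real.hasDerivAt_sin (a * 0)).comp 0 ((hasDerivAt_id 0).const_mul a)
  simp at h
  exact h

lemma eq_of_sin_mul_eq (a b : ℝ) (h : ∀ φ : ℝ, Real.sin (a * φ) = Real.sin (b * φ)) :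
    a = b := by
  have h1 := sin_mul_deriv a
  have h2 : HasDerivAt (fun φ : ℝ => Real.sin (a * φ)) b 0 := by
    have := sin_mul_deriv b
    simpa [funext h] using this
  exact h1.unique h2

theorem lissajous_ne_of_ratio_ne (x y x' y' : ℝ)
    (hx : 0 < x) (hy : 0 < y) (hx' : 0 < x') (hy' : 0 < y')
    (hratio : x / y ≠ x' / y') :
    ∃ φ : ℝ, (Real.sin (x * φ), Real.sin (y * φ)) ≠
      (Real.sin (x' * φ), Real.sin (y' * φ)) := by
  by_contra h
  push_neg at h
  have hxx : x = x' := eq_of_sin_mul_eq x x' fun φ => (Prod.mk.injEq _ _ _ _ ▸ h φ).1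
  have hyy : y = y' := eq_of_sin_mul_eq y y' fun φ => (Prod.mk.injEq _ _ _ _ ▸ h φ).2
  exact hratio (by rw [hxx, hyy])
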